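/- Let X be a dataset of n > 0 positive reals and 0 < q ≤ 1. If X̂ᵖ is the paretro-midpoint resampling of the circllhist summary of X, then |Q¹_q(X) − Q¹_q(X̂ᵖ)| ≤ (1/21)·Q¹_q(X). -/

import Mathlib

/-- The minimal type-1 q-quantile of a dataset: the ⌈q·n⌉-th order statistic. -/
noncomputable def Q1 {n : ℕ} (X : Fin n → ℝ) (q : ℝ) : ℝ :=
  ((List.ofFn X).mergeSort (fun x y => x ≤ y)).getD ((⌈q * n⌉).toNat - 1) 0

/-- The lower boundary of the circllhist bin containing a positive real `x`. -/
noncomputable def circBinLo (x : ℝ) : ℝ :=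
  (⌊x * (10 : ℝ) ^ (-(⌊Real.logb 10 x⌋) + 1)⌋ : ℝ) * (10 : ℝ) ^ (⌊Real.logb 10 x⌋ - 1)

/-- The upper boundary of the circllhist bin containing a positive real `x`. -/
noncomputable def circBinHi (x : ℝ) : ℝ :=
  ((⌊x * (10 : ℝ) ^ (-(⌊Real.logb 10 x⌋) + 1)⌋ : ℝ) + 1) * (10 : ℝ) ^ (⌊Real.logb 10 x⌋ - 1)

/-- The paretro midpoint of the circllhist bin containing `x`: the value to which `x`
is mapped under paretro-midpoint resampling of the circllhist summary. -/
noncomputable def circMid (x : ℝ) : ℝ :=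
  2 * circBinLo x * circBinHi x / (circBinLo x + circBinHi x)

lemma circ_master {x : ℝ} (hx : 0 < x) :
    (10:ℤ) ≤ ⌊x * (10 : ℝ) ^ (-(⌊Real.logb 10 x⌋) + 1)⌋ ∧
    ⌊x * (10 : ℝ) ^ (-(⌊Real.logb 10 x⌋) + 1)⌋ ≤ 99 ∧
    circBinLo x ≤ x ∧ x < circBinHi x := by
  set e : ℤ := ⌊Real.logb 10 x⌋ with he
  set t : ℝ := x * (10 : ℝ) ^ (-e + 1) with ht
  have h10 : (10:ℝ) ≠ 0 := by norm_num
  have hlogb : (10:ℝ) ^ (Real.logb 10 x) = x :=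
    Real.rpow_logb (by norm_num) (by norm_num) hx
  have hlo : (10:ℝ) ^ (e:ℝ) ≤ x := by
    rw [← hlogb]
    exact (Real.rpow_le_rpow_left_iff (by norm_num)).mpr (Int.floor_le _)
  have hhi : x < (10:ℝ) ^ ((e:ℝ) + 1) := by
    rw [← hlogb]
    exact (Real.rpow_lt_rpow_left_iff (by norm_num)).mpr (Int.lt_floor_add_one _)
  have hlo' : (10:ℝ) ^ e ≤ x := by rwa [← Real.rpow_intCast (10:ℝ) e]
  have hhi' : x < (10:ℝ) ^ (e + 1) := by
    have : ((e:ℝ) + 1) = ((e + 1 : ℤ) : ℝ) := by push_cast; ring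
    rwa [this, Real.rpow_intCast] at hhi
  have hzpos : (0:ℝ) < (10:ℝ) ^ (-e + 1) := by positivity
  have ht10 : (10:ℝ) ≤ t := by
    have h := mul_le_mul_of_nonneg_right hlo' hzpos.le
    rw [← zpow_add₀ h10, show e + (-e + 1) = 1 by ring] at h
    norm_num at h
    exact h
  have ht100 : t < 100 := by
    have h := mul_lt_mul_of_pos_right hhi' hzpos
    rw [← zpow_add₀ h10, show (e + 1) + (-e + 1) = 2 by ring] at h
    norm_num at h
    exact h
  have hd10 : (10:ℤ) ≤ ⌊t⌋ := Int.le_floor.mpr (by exact_mod_cast ht10)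
  have hd99 : ⌊t⌋ ≤ 99 := by
    have : ⌊t⌋ < 100 := Int.floor_lt.mpr (by exact_mod_cast ht100)
    omega
  have hxe : x = t * (10:ℝ) ^ (e - 1) := by
    rw [ht, mul_assoc, ← zpow_add₀ h10]
    norm_num
  have hupos : (0:ℝ) < (10:ℝ) ^ (e - 1) := by positivity
  refine ⟨hd10, hd99, ?_, ?_⟩
  · show (⌊t⌋ : ℝ) * (10:ℝ) ^ (e - 1) ≤ x
    rw [hxe]
    exact mul_le_mul_of_nonneg_right (Int.floor_le t) hupos.le
  · show x < ((⌊t⌋ : ℝ) + 1) * (10:ℝ) ^ (e - 1)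
    rw [hxe]
    exact mul_lt_mul_of_pos_right (Int.lt_floor_add_one t) hupos

lemma circMid_bounds {x : ℝ} (hx : 0 < x) :
    (20/21) * x ≤ circMid x ∧ circMid x ≤ (22/21) * x := by
  obtain ⟨hd10, hd99, hlox, hxhi⟩ := circ_master hx
  set e : ℤ := ⌊Real.logb 10 x⌋
  set d : ℤ := ⌊x * (10 : ℝ) ^ (-e + 1)⌋
  set u : ℝ := (10:ℝ) ^ (e - 1) with hu
  have hupos : (0:ℝ) < u := by positivity
  have hdr : (10:ℝ) ≤ (d:ℝ) := by exact_mod_cast hd10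
  have hlo : circBinLo x = (d:ℝ) * u := rfl
  have hhi : circBinHi x = ((d:ℝ) + 1) * u := rfl
  have hden : circBinLo x + circBinHi x = (2*(d:ℝ)+1) * u := by rw [hlo, hhi]; ring
  have hdenpos : (0:ℝ) < (2*(d:ℝ)+1) * u := by positivity
  rw [hlo] at hlox
  rw [hhi] at hxhi
  constructor
  · rw [circMid, hden, hlo, hhi, le_div_iff₀ hdenpos]
    have h1 := mul_lt_mul_of_pos_right hxhi hdenpos
    have h2 : (0:ℝ) ≤ ((d:ℝ) + 1) * (2*(d:ℝ) - 20) * (u*u) :=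
      mul_nonneg (mul_nonneg (by linarith) (by linarith)) (mul_pos hupos hupos).le
    nlinarith [h1, h2]
  · rw [circMid, hden, hlo, hhi, div_le_iff₀ hdenpos]
    have h1 := mul_le_mul_of_nonneg_right hlox hdenpos.le
    have h2 : (0:ℝ) ≤ (d:ℝ) * (2*(d:ℝ) - 20) * (u*u) :=
      mul_nonneg (mul_nonneg (by linarith) (by linarith)) (mul_pos hupos hupos).le
    nlinarith [h1, h2]

lemma circMid_mono {x y : ℝ} (hx : 0 < x) (hxy : x ≤ y) : circMid x ≤ circMid y := by
  have hy : 0 < y := hx.trans_le hxy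
  obtain ⟨hdx10, hdx99, hlox, hxhi⟩ := circ_master hx
  obtain ⟨hdy10, hdy99, hloy, hyhi⟩ := circ_master hy
  set ex : ℤ := ⌊Real.logb 10 x⌋ with hex
  set ey : ℤ := ⌊Real.logb 10 y⌋ with hey
  set dx : ℤ := ⌊x * (10 : ℝ) ^ (-ex + 1)⌋ with hdx
  set dy : ℤ := ⌊y * (10 : ℝ) ^ (-ey + 1)⌋ with hdy
  have h10 : (10:ℝ) ≠ 0 := by norm_num
  have he : ex ≤ ey := Int.floor_le_floor (Real.logb_le_logb_of_le (by norm_num) hx hxy)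
  set ux : ℝ := (10:ℝ) ^ (ex - 1) with hux
  set uy : ℝ := (10:ℝ) ^ (ey - 1) with huy
  have huxpos : (0:ℝ) < ux := by positivity
  have huypos : (0:ℝ) < uy := by positivity
  have hdxr : (10:ℝ) ≤ (dx:ℝ) := by exact_mod_cast hdx10
  have hdyr : (10:ℝ) ≤ (dy:ℝ) := by exact_mod_cast hdy10
  have hdxr99 : (dx:ℝ) ≤ 99 := by exact_mod_cast hdx99
  have hlo_x : circBinLo x = (dx:ℝ) * ux := rfl
  have hhi_x : circBinHi x = ((dx:ℝ) + 1) * ux := rfl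
  have hlo_y : circBinLo y = (dy:ℝ) * uy := rfl
  have hhi_y : circBinHi y = ((dy:ℝ) + 1) * uy := rfl
  -- mid lies between lo and hi
  have hmid_le_hi : ∀ (a u : ℝ), 10 ≤ a → 0 < u →
      2 * (a*u) * ((a+1)*u) / (a*u + (a+1)*u) ≤ (a+1)*u := by
    intro a u ha hu
    rw [div_le_iff₀ (by positivity)]
    nlinarith [mul_nonneg (show (0:ℝ) ≤ a + 1 by linarith) (mul_pos hu hu).le]
  have hlo_le_mid : ∀ (a u : ℝ), 10 ≤ a → 0 < u →
      a*u ≤ 2 * (a*u) * ((a+1)*u) / (a*u + (a+1)*u) := by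
    intro a u ha hu
    rw [le_div_iff₀ (by positivity)]
    nlinarith [mul_nonneg (show (0:ℝ) ≤ a by linarith) (mul_pos hu hu).le]
  rcases eq_or_lt_of_le he with heq | hlt
  · -- same exponent: compare d's
    have hcx : x * (10 : ℝ) ^ (-ex + 1) ≤ y * (10 : ℝ) ^ (-ex + 1) := by
      have : (0:ℝ) < (10:ℝ) ^ (-ex + 1) := by positivity
      exact mul_le_mul_of_nonneg_right hxy this.le
    have hdxy : dx ≤ dy := by
      rw [hdx, hdy, ← heq]
      exact Int.floor_le_floor hcx
    have hdxyr : (dx:ℝ) ≤ (dy:ℝ) := by exact_mod_cast hdxy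
    have huxy : ux = uy := by rw [hux, huy, heq]
    rw [circMid, circMid, hlo_x, hhi_x, hlo_y, hhi_y, ← huxy]
    rw [div_le_div_iff₀ (by positivity) (by positivity)]
    nlinarith [huxpos, hdxr, hdxyr, mul_pos huxpos huxpos,
      mul_nonneg (mul_nonneg (sub_nonneg.mpr hdxyr)
        (by nlinarith : (0:ℝ) ≤ 2*(dx:ℝ)*(dy:ℝ) + dx + dy + 1))
        (mul_pos (mul_pos huxpos huxpos) huxpos).le]
  · -- x's bin is strictly below y's
    have h1 : circMid x ≤ circBinHi x := by
      rw [circMid, hlo_x, hhi_x]; exact hmid_le_hi _ _ hdxr huxpos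
    have h4 : circBinLo y ≤ circMid y := by
      rw [circMid, hlo_y, hhi_y]; exact hlo_le_mid _ _ hdyr huypos
    have h2 : circBinHi x ≤ (10:ℝ) ^ (ex + 1) := by
      rw [hhi_x]
      have : (10:ℝ) ^ (ex + 1) = 100 * ux := by
        rw [hux, show ex + 1 = 2 + (ex - 1) by ring, zpow_add₀ h10]
        norm_num
      rw [this]
      nlinarith [huxpos, hdxr99]
    have h3 : (10:ℝ) ^ (ex + 1) ≤ circBinLo y := by
      have hz : (10:ℝ) ^ (ex + 1) ≤ (10:ℝ) ^ ey := by
        apply zpow_le_zpow_right₀ (by norm_num) (by omega)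
      have : (10:ℝ) ^ ey = 10 * uy := by
        rw [huy, show ey = 1 + (ey - 1) by ring, zpow_add₀ h10]
        norm_num
      rw [hlo_y]
      nlinarith [huypos, hdyr, hz, this]
    linarith

/-- The type-1 quantile of the paretro-midpoint resampling of the
circllhist summary approximates the type-1 quantile with relative error ≤ 1/21. -/
theorem circllhist_quantile_paretro_error {n : ℕ} (hn : 0 < n)
    (X : Fin n → ℝ) (hX : ∀ j, 0 < X j) (q : ℝ) (hq0 : 0 < q) (hq1 : q ≤ 1) :
    |Q1 X q - Q1 (fun j => circMid (X j)) q| ≤ (1 / 21) * Q1 X q := by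
  classical
  set S : List ℝ := (List.ofFn X).mergeSort (fun x y => x ≤ y) with hS
  set k : ℕ := (⌈q * n⌉).toNat - 1 with hk
  -- index bounds
  have hnpos : (0:ℝ) < n := by exact_mod_cast hn
  have hceil_pos : (1:ℤ) ≤ ⌈q * (n:ℝ)⌉ := by
    have : (0:ℝ) < q * n := mul_pos hq0 hnpos
    exact Int.ceil_pos.mpr this
  have hceil_le : ⌈q * (n:ℝ)⌉ ≤ (n:ℤ) := by
    have h1 : q * (n:ℝ) ≤ (n:ℝ) := by nlinarith
    calc ⌈q * (n:ℝ)⌉ ≤ ⌈((n:ℤ):ℝ)⌉ := Int.ceil_le_ceil (by exact_mod_cast h1)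
      _ = (n:ℤ) := Int.ceil_intCast _
  have hkn : k < n := by
    have h1 : 1 ≤ (⌈q * (n:ℝ)⌉).toNat := by omega
    have h2 : (⌈q * (n:ℝ)⌉).toNat ≤ n := by omega
    omega
  have hlenS : S.length = n := by rw [hS, List.length_mergeSort, List.length_ofFn]
  have hkS : k < S.length := by rw [hlenS]; exact hkn
  -- positivity of members of S
  have hposS : ∀ a ∈ S, 0 < a := by
    intro a ha
    rw [hS, List.mem_mergeSort, List.mem_ofFn] at ha
    obtain ⟨j, rfl⟩ := ha
    exact hX j
  -- S is sorted
  have hsortedS : List.Pairwise (· ≤ ·) S := by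
    have h := List.pairwise_mergeSort (le := fun x y : ℝ => decide (x ≤ y))
      (fun a b c hab hbc => by
        simp only [decide_eq_true_eq] at *; exact le_trans hab hbc)
      (fun a b => by
        simp only [Bool.or_eq_true, decide_eq_true_eq]; exact le_total a b)
      (List.ofFn X)
    simpa only [decide_eq_true_eq] using h
  -- merge sort of the resampled data is the map of the sorted list
  have hmapeq : (List.ofFn (fun j => circMid (X j))).mergeSort (fun x y => x ≤ y)
      = S.map circMid := by
    refine (fun hp h1 h2 => List.Perm.eq_of_pairwise' (r := (· ≤ ·)) h1 h2 hp) ?_ ?_ ?_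
    · refine (List.mergeSort_perm _ _).trans ?_
      have h1 : List.ofFn (fun j => circMid (X j)) = (List.ofFn X).map circMid := by
        rw [List.map_ofFn]; rfl
      rw [h1]
      exact List.Perm.map circMid (List.mergeSort_perm (List.ofFn X) _).symm
    · have h := List.pairwise_mergeSort (le := fun x y : ℝ => decide (x ≤ y))
        (fun a b c hab hbc => by
          simp only [decide_eq_true_eq] at *; exact le_trans hab hbc)
        (fun a b => by
          simp only [Bool.or_eq_true, decide_eq_true_eq]; exact le_total a b)
        (List.ofFn (fun j => circMid (X j)))
      simpa only [decide_eq_true_eq] using h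
    · rw [List.pairwise_map]
      exact hsortedS.imp_of_mem (fun ha hb hab => circMid_mono (hposS _ ha) hab)
  -- evaluate the quantiles
  have hq1x : Q1 X q = S[k] := by
    rw [Q1, ← hS, ← hk, List.getD_eq_getElem S 0 hkS]
  have hq1m : Q1 (fun j => circMid (X j)) q = circMid S[k] := by
    rw [Q1, hmapeq, ← hk]
    have hkS' : k < (S.map circMid).length := by rwa [List.length_map]
    rw [List.getD_eq_getElem _ 0 hkS', List.getElem_map]
  have hposk : 0 < S[k] := hposS _ (List.getElem_mem hkS)
  obtain ⟨hb1, hb2⟩ := circMid_bounds hposk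
  rw [hq1x, hq1m, abs_le]
  constructor <;> linarith
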